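/- For the 3D spherical helix array with unit climb rate, the azimuth Fisher-information term satisfies B_helix(θ, φ) = (π³r²/λ²)·sin²θ·(cos(2φ) + 2), obtained as ∫₀^{2π} (4π²r²/λ²)·(sinθ · sin τ · sin(φ − τ))² dτ = (π³r²/λ²)·sin²θ·(cos 2φ + 2). -/

import Mathlib

open Real

theorem helix_azimuth_fisher_term (r lam θ φ : ℝ) (hr : 0 < r) (hlam : 0 < lam) :
    (∫ τ in (0:ℝ)..(2 * π),
        (4 * π ^ 2 * r ^ 2 / lam ^ 2) * (sin θ * sin τ * sin (φ - τ)) ^ 2)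
      = (π ^ 3 * r ^ 2 / lam ^ 2) * (sin θ) ^ 2 * (cos (2 * φ) + 2) := by
  set C : ℝ := 4 * π ^ 2 * r ^ 2 / lam ^ 2 * sin θ ^ 2 with hC
  have key : ∀ x ∈ Set.uIcc (0:ℝ) (2*π),
      HasDerivAt (fun y : ℝ => C * (sin φ ^ 2 * (y/8 - (sin y * cos y ^ 3 - sin y ^ 3 * cos y)/8)
          - 2*sin φ*cos φ*(sin y ^ 4/4)
          + cos φ ^ 2 * (3*y/8 - 3*(sin y * cos y)/8 - sin y ^ 3 * cos y/4)))
        (4 * π ^ 2 * r ^ 2 / lam ^ 2 * (sin θ * sin x * sin (φ - x)) ^ 2) x := by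
    intro x _
    have hs := Real.hasDerivAt_sin x
    have hc := Real.hasDerivAt_cos x
    have H := ((((((hasDerivAt_id x).div_const 8).sub
        (((hs.mul (hc.pow 3)).sub ((hs.pow 3).mul hc)).div_const 8)).const_mul (sin φ ^ 2)).sub
        (((hs.pow 4).div_const 4).const_mul (2*sin φ*cos φ))).add
        ((((((hasDerivAt_id x).const_mul 3).div_const 8).sub
          (((hs.mul hc).const_mul 3).div_const 8)).sub
          (((hs.pow 3).mul hc).div_const 4)).const_mul (cos φ ^ 2))).const_mul C
    convert H using 1
    case e'_4 => rfl
    case e'_5 => rfl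
    case e'_8 => rfl
    rw [sin_sub, hC]
    norm_num
    linear_combination (4 * π ^ 2 * r ^ 2 / lam ^ 2 * sin θ ^ 2 *
      (sin φ ^ 2 * (sin x ^ 2 + cos x ^ 2 + 1) + cos φ ^ 2 * (6 * sin x ^ 2 + 3)) / 8) *
      sin_sq_add_cos_sq x
  have hint : IntervalIntegrable
      (fun x => 4 * π ^ 2 * r ^ 2 / lam ^ 2 * (sin θ * sin x * sin (φ - x)) ^ 2)
      MeasureTheory.volume 0 (2*π) := (by continuity : Continuous
      (fun x => 4 * π ^ 2 * r ^ 2 / lam ^ 2 * (sin θ * sin x * sin (φ - x)) ^ 2)).intervalIntegrable _ _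
  rw [intervalIntegral.integral_eq_sub_of_hasDerivAt key hint]
  simp [Real.sin_two_pi, Real.cos_two_pi, Real.cos_two_mul, hC]
  linear_combination (π ^ 3 * r ^ 2 / lam ^ 2 * sin θ ^ 2) * sin_sq_add_cos_sq φ
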